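/- Let P ⊆ ℝ^d be a 0/1-polytope and let u, v ∈ vert(P) be two distinct vertices of P. Then the number of walls W of P such that u, v, and their mirror images u^W and v^W are all contained in W is at most |vert(P)|/2. -/

import Mathlib

open scoped Classical

noncomputable section

/-- All points of `X` are 0/1-vectors. -/
def IsZeroOne {ι : Type*} (X : Finset (ι → ℝ)) : Prop :=
  ∀ x ∈ X, ∀ i, x i = 0 ∨ x i = 1

/-- Two vertices `u v` of the 0/1-polytope `P = conv X` are adjacent iff they are
distinct and there is a linear functional whose maximum over `P` is attained
exactly on the segment `[u, v]`. -/
def PolytopeAdj {ι : Type*} [Fintype ι] (X : Finset (ι → ℝ)) (u v : ι → ℝ) : Prop :=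
  u ∈ X ∧ v ∈ X ∧ u ≠ v ∧ ∃ (f : (ι → ℝ) →ₗ[ℝ] ℝ) (c : ℝ),
    (∀ x ∈ convexHull ℝ (X : Set (ι → ℝ)), f x ≤ c) ∧
    {x ∈ convexHull ℝ (X : Set (ι → ℝ)) | f x = c} = segment ℝ u v

/-- The graph `G(P)` of the 0/1-polytope `P = conv X`, on the vertex set `X`. -/
def polytopeGraph {ι : Type*} [Fintype ι] (X : Finset (ι → ℝ)) :
    SimpleGraph {x // x ∈ X} where
  Adj u v := PolytopeAdj X u.1 v.1
  symm := by
    constructor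
    rintro u v ⟨hu, hv, hne, f, c, h1, h2⟩
    exact ⟨hv, hu, hne.symm, f, c, h1, by rw [h2, segment_symm]⟩
  loopless := by constructor; rintro u ⟨_, _, hne, _⟩; exact hne rfl
/-- A wall of the 0/1-polytope with vertex set `X`: a nonempty set of vertices
obtained by intersecting `X` with a face of the 0/1-cube, given by a sign vector
`σ ∈ {0,1,⋆}^ι` (encoded as `ι → Option Bool`, `none` being `⋆`). -/
def IsWall {ι : Type*} (X : Finset (ι → ℝ)) (W : Set (ι → ℝ)) : Prop :=
  W.Nonempty ∧ ∃ σ : ι → Option Bool,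
    W = {x | x ∈ X ∧ ∀ i, ∀ b, σ i = some b → x i = (if b then (1 : ℝ) else 0)}

/-- `σ(W)ᵢ = ⋆`, i.e. the points of `W` do not all agree in coordinate `i`. -/
def IsStarCoord {ι : Type*} (W : Set (ι → ℝ)) (i : ι) : Prop :=
  ∃ x ∈ W, ∃ y ∈ W, x i ≠ y i
/-- The mirror image `x^W = x ⊕ t^(W)` of a 0/1-point `x` with respect to a wall
`W`, where `t^(W)` has ones exactly in the star coordinates of `W`. -/
def mirrorImage {ι : Type*} (W : Set (ι → ℝ)) (x : ι → ℝ) : ι → ℝ :=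
  fun i => if IsStarCoord W i then 1 - x i else x i


lemma wall_subset {ι : Type*} {X : Finset (ι → ℝ)} {W : Set (ι → ℝ)}
    (hW : IsWall X W) : W ⊆ ↑X := by
  obtain ⟨-, σ, hσ⟩ := hW
  rw [hσ]; intro x hx; exact hx.1

lemma wall_eq {ι : Type*} {X : Finset (ι → ℝ)} {W : Set (ι → ℝ)} {u : ι → ℝ}
    (hW : IsWall X W) (hu : u ∈ W) :
    W = {x | x ∈ X ∧ ∀ i, ¬ IsStarCoord W i → x i = u i} := by
  obtain ⟨-, σ, hσ⟩ := hW
  ext x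
  constructor
  · intro hx
    have hx' := hx
    rw [hσ] at hx'
    refine ⟨hx'.1, fun i hi => ?_⟩
    by_contra h
    exact hi ⟨x, hx, u, hu, h⟩
  · rintro ⟨hxX, hagree⟩
    have hu' := hu
    rw [hσ] at hu'
    rw [hσ]
    refine ⟨hxX, fun i b hb => ?_⟩
    have hns : ¬ IsStarCoord W i := by
      rintro ⟨a, ha, c, hc, hne⟩
      rw [hσ] at ha hc
      exact hne ((ha.2 i b hb).trans (hc.2 i b hb).symm)
    rw [hagree i hns, hu'.2 i b hb]

lemma mirror_inj {ι : Type*} {X : Finset (ι → ℝ)} (hX01 : IsZeroOne X)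
    {W₁ W₂ : Set (ι → ℝ)} {u : ι → ℝ} (hW₁ : IsWall X W₁) (hW₂ : IsWall X W₂)
    (hu₁ : u ∈ W₁) (hu₂ : u ∈ W₂)
    (h : mirrorImage W₁ u = mirrorImage W₂ u) : W₁ = W₂ := by
  have huX : u ∈ X := wall_subset hW₁ hu₁
  have hstar : IsStarCoord W₁ = IsStarCoord W₂ := by
    funext i
    have hi := congrFun h i
    simp only [mirrorImage] at hi
    have h01 := hX01 u huX i
    apply propext
    constructor
    · intro h₁
      by_contra h₂
      rw [if_pos h₁, if_neg h₂] at hi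
      rcases h01 with h0 | h0 <;> rw [h0] at hi <;> norm_num at hi
    · intro h₂
      by_contra h₁
      rw [if_neg h₁, if_pos h₂] at hi
      rcases h01 with h0 | h0 <;> rw [h0] at hi <;> norm_num at hi
  rw [wall_eq hW₁ hu₁, wall_eq hW₂ hu₂, hstar]

/-- Let `P ⊆ ℝ^d` be a 0/1-polytope and let `u ≠ v` be two
vertices of `P`. Then the number of walls `W` of `P` such that `u`, `v`, and
their mirror images `u^W`, `v^W` are all contained in `W` is at most
`|vert(P)|/2`. -/
theorem card_walls_with_mirrors_le {d : ℕ} (X : Finset (Fin d → ℝ))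
    (hX01 : IsZeroOne X) (u v : Fin d → ℝ) (hu : u ∈ X) (hv : v ∈ X)
    (huv : u ≠ v) :
    2 * {W : Set (Fin d → ℝ) | IsWall X W ∧ u ∈ W ∧ v ∈ W ∧
        mirrorImage W u ∈ W ∧ mirrorImage W v ∈ W}.ncard ≤ X.card := by
  set 𝒲 : Set (Set (Fin d → ℝ)) := {W : Set (Fin d → ℝ) | IsWall X W ∧ u ∈ W ∧ v ∈ W ∧
        mirrorImage W u ∈ W ∧ mirrorImage W v ∈ W} with h𝒲
  set A : Set (Fin d → ℝ) := (fun W => mirrorImage W u) '' 𝒲 with hA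
  set B : Set (Fin d → ℝ) := (fun W => mirrorImage W v) '' 𝒲 with hB
  have hAX : A ⊆ ↑X := by
    rintro x ⟨W, hW, rfl⟩
    exact wall_subset hW.1 hW.2.2.2.1
  have hBX : B ⊆ ↑X := by
    rintro x ⟨W, hW, rfl⟩
    exact wall_subset hW.1 hW.2.2.2.2
  have hAfin : A.Finite := X.finite_toSet.subset hAX
  have hBfin : B.Finite := X.finite_toSet.subset hBX
  -- a coordinate where u and v differ is a star coordinate of every wall in 𝒲
  obtain ⟨i, hi⟩ := Function.ne_iff.mp huv
  have hABdisj : Disjoint A B := by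
    rw [Set.disjoint_left]
    rintro x ⟨W₁, hW₁, rfl⟩ ⟨W₂, hW₂, hx⟩
    have hs₁ : IsStarCoord W₁ i := ⟨u, hW₁.2.1, v, hW₁.2.2.1, hi⟩
    have hs₂ : IsStarCoord W₂ i := ⟨u, hW₂.2.1, v, hW₂.2.2.1, hi⟩
    have := congrFun hx i
    simp only [mirrorImage, if_pos hs₁, if_pos hs₂] at this
    exact hi (by linarith)
  have hAcard : A.ncard = 𝒲.ncard := by
    apply Set.ncard_image_of_injOn
    intro W₁ hW₁ W₂ hW₂ h
    exact mirror_inj hX01 hW₁.1 hW₂.1 hW₁.2.1 hW₂.2.1 h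
  have hBcard : B.ncard = 𝒲.ncard := by
    apply Set.ncard_image_of_injOn
    intro W₁ hW₁ W₂ hW₂ h
    exact mirror_inj hX01 hW₁.1 hW₂.1 hW₁.2.2.1 hW₂.2.2.1 h
  have hunion : (A ∪ B).ncard = A.ncard + B.ncard :=
    Set.ncard_union_eq hABdisj hAfin hBfin
  have hle : (A ∪ B).ncard ≤ X.card := by
    rw [← Set.ncard_coe_finset]
    exact Set.ncard_le_ncard (Set.union_subset hAX hBX) X.finite_toSet
  omega
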